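/- For every integer m ≥ 3, the subgroup Δ_m of SL₂(ℤ) generated by the matrices [[1,m],[0,1]] and [[1,0],[m,1]] has infinite index in SL₂(ℤ). -/

import Mathlib

open Matrix

namespace DeltaAux

abbrev SL2 := Matrix.SpecialLinearGroup (Fin 2) ℤ

def eps (s : Bool) : ℤ := cond s 1 (-1)

lemma eps_cases (s : Bool) : eps s = 1 ∨ eps s = -1 := by cases s <;> simp [eps]

/-- ping-pong arithmetic step, entering the A region from the closure of the B region. -/
lemma stepA (m x y ε : ℤ) (hm : 3 ≤ m) (hε : ε = 1 ∨ ε = -1)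
    (h1 : |x| ≤ |y|) (h2 : y ≠ 0) :
    |y| < |x + ε * m * y| ∧ 0 < ε * (x + ε * m * y) * y := by
  have hy1 : (1 : ℤ) ≤ |y| := Int.one_le_abs h2
  have hyy : |y| * |y| = y * y := abs_mul_abs_self y
  have hxy : |x * y| = |x| * |y| := abs_mul x y
  have hb : |ε * m * y| ≤ |x + ε * m * y| + |x| := by
    have h := abs_add_le (x + ε * m * y) (-x)
    have h2 : x + ε * m * y + -x = ε * m * y := by ring
    rw [h2, abs_neg] at h
    exact h
  have hm0 : (0:ℤ) ≤ m := by linarith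
  have hmy : |ε * m * y| = m * |y| := by
    rcases hε with rfl | rfl <;>
      simp [abs_mul, abs_of_nonneg hm0]
  have hsign : -( |x| * |y|) ≤ ε * x * y := by
    have h3 : |ε * x * y| = |x| * |y| := by
      rcases hε with rfl | rfl <;> simp [abs_mul]
    have := neg_abs_le (ε * x * y)
    linarith
  constructor
  · nlinarith [abs_nonneg x, abs_nonneg (x + ε * m * y)]
  · have he2 : ε * ε = 1 := by rcases hε with rfl | rfl <;> norm_num
    have hexp : ε * (x + ε * m * y) * y = ε * x * y + m * (y * y) := by
      have : ε * (x + ε * m * y) * y = ε * x * y + (ε * ε) * (m * (y * y)) := by ring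
      rw [this, he2]; ring
    rw [hexp]
    nlinarith [mul_le_mul_of_nonneg_right h1 (abs_nonneg y)]

/-- same-region step: staying in the A region (same sign). -/
lemma stepA' (m x y ε : ℤ) (hm : 3 ≤ m) (hε : ε = 1 ∨ ε = -1)
    (h1 : |y| < |x|) (h2 : 0 < ε * x * y) :
    |y| < |x + ε * m * y| ∧ 0 < ε * (x + ε * m * y) * y := by
  have hm0 : (0:ℤ) ≤ m := by linarith
  have he2 : ε * ε = 1 := by rcases hε with rfl | rfl <;> norm_num
  have hexp : ε * (x + ε * m * y) * y = ε * x * y + m * (y * y) := by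
    have h : ε * (x + ε * m * y) * y = ε * x * y + (ε * ε) * (m * (y * y)) := by ring
    rw [h, he2]; ring
  constructor
  · have h1' : y ^ 2 < x ^ 2 := by
      have := sq_lt_sq.mpr (lt_of_lt_of_le h1 (le_abs_self |x|))
      simpa [sq_abs] using this
    have hsq : y ^ 2 < (x + ε * m * y) ^ 2 := by
      have hexpand : (x + ε * m * y) ^ 2
          = x ^ 2 + 2 * m * (ε * x * y) + (ε * ε) * ((m * y) ^ 2) := by ring
      rw [he2, one_mul] at hexpand
      nlinarith [mul_nonneg hm0 h2.le, sq_nonneg (m * y)]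
    calc |y| ≤ |y| := le_rfl
      _ < |x + ε * m * y| := sq_lt_sq.mp hsq
  · rw [hexp]
    nlinarith [mul_nonneg hm0 (mul_self_nonneg y)]


def tok (m : ℤ) (l : Bool × Bool) : Matrix (Fin 2) (Fin 2) ℤ :=
  if l.1 then !![1, eps l.2 * m; 0, 1] else !![1, 0; eps l.2 * m, 1]

def X0 (g : Matrix (Fin 2) (Fin 2) ℤ) : ℤ := g 0 0 + g 0 1
def Y0 (g : Matrix (Fin 2) (Fin 2) ℤ) : ℤ := g 1 0 + g 1 1

lemma X0_one : X0 1 = 1 := by simp [X0, Matrix.one_fin_two]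
lemma Y0_one : Y0 1 = 1 := by simp [Y0, Matrix.one_fin_two]

lemma X0_tokA (m : ℤ) (s : Bool) (g : Matrix (Fin 2) (Fin 2) ℤ) :
    X0 (tok m (true, s) * g) = X0 g + eps s * m * Y0 g := by
  simp [tok, X0, Y0, Matrix.mul_apply, Fin.sum_univ_two]
  ring

lemma Y0_tokA (m : ℤ) (s : Bool) (g : Matrix (Fin 2) (Fin 2) ℤ) :
    Y0 (tok m (true, s) * g) = Y0 g := by
  simp [tok, X0, Y0, Matrix.mul_apply, Fin.sum_univ_two]

lemma X0_tokB (m : ℤ) (s : Bool) (g : Matrix (Fin 2) (Fin 2) ℤ) :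
    X0 (tok m (false, s) * g) = X0 g := by
  simp [tok, X0, Y0, Matrix.mul_apply, Fin.sum_univ_two]

lemma Y0_tokB (m : ℤ) (s : Bool) (g : Matrix (Fin 2) (Fin 2) ℤ) :
    Y0 (tok m (false, s) * g) = Y0 g + eps s * m * X0 g := by
  simp [tok, X0, Y0, Matrix.mul_apply, Fin.sum_univ_two]
  ring

/-- the conclusion of the ping-pong lemma, depending on the leading letter. -/
def Concl (m : ℤ) (l : Bool × Bool) (g : Matrix (Fin 2) (Fin 2) ℤ) : Prop :=
  if l.1 then |Y0 g| < |X0 g| ∧ 0 < eps l.2 * X0 g * Y0 g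
  else |X0 g| < |Y0 g| ∧ 0 < eps l.2 * X0 g * Y0 g

lemma conclA (m : ℤ) (hm : 3 ≤ m) (s : Bool) (g : Matrix (Fin 2) (Fin 2) ℤ)
    (h1 : |X0 g| ≤ |Y0 g|) (h2 : Y0 g ≠ 0) :
    Concl m (true, s) (tok m (true, s) * g) := by
  have h := stepA m (X0 g) (Y0 g) (eps s) hm (eps_cases s) h1 h2
  simpa [Concl, X0_tokA, Y0_tokA] using h

lemma conclA' (m : ℤ) (hm : 3 ≤ m) (s : Bool) (g : Matrix (Fin 2) (Fin 2) ℤ)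
    (h1 : |Y0 g| < |X0 g|) (h2 : 0 < eps s * X0 g * Y0 g) :
    Concl m (true, s) (tok m (true, s) * g) := by
  have h := stepA' m (X0 g) (Y0 g) (eps s) hm (eps_cases s) h1 h2
  simpa [Concl, X0_tokA, Y0_tokA] using h

lemma conclB (m : ℤ) (hm : 3 ≤ m) (s : Bool) (g : Matrix (Fin 2) (Fin 2) ℤ)
    (h1 : |Y0 g| ≤ |X0 g|) (h2 : X0 g ≠ 0) :
    Concl m (false, s) (tok m (false, s) * g) := by
  have h := stepA m (Y0 g) (X0 g) (eps s) hm (eps_cases s) h1 h2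
  have h2' : 0 < eps s * X0 g * (Y0 g + eps s * m * X0 g) := by
    have := h.2; linarith [h.2, (by ring :
      eps s * (Y0 g + eps s * m * X0 g) * X0 g
        = eps s * X0 g * (Y0 g + eps s * m * X0 g))]
  simp only [Concl, X0_tokB, Y0_tokB, if_neg (by simp : ¬ ((false, s).1 = true))]
  exact ⟨h.1, h2'⟩

lemma conclB' (m : ℤ) (hm : 3 ≤ m) (s : Bool) (g : Matrix (Fin 2) (Fin 2) ℤ)
    (h1 : |X0 g| < |Y0 g|) (h2 : 0 < eps s * X0 g * Y0 g) :
    Concl m (false, s) (tok m (false, s) * g) := by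
  have h2'' : 0 < eps s * Y0 g * X0 g := by linarith [(by ring :
    eps s * Y0 g * X0 g = eps s * X0 g * Y0 g)]
  have h := stepA' m (Y0 g) (X0 g) (eps s) hm (eps_cases s) h1 h2''
  have h2' : 0 < eps s * X0 g * (Y0 g + eps s * m * X0 g) := by
    linarith [h.2, (by ring :
      eps s * (Y0 g + eps s * m * X0 g) * X0 g
        = eps s * X0 g * (Y0 g + eps s * m * X0 g))]
  simp only [Concl, X0_tokB, Y0_tokB, if_neg (by simp : ¬ ((false, s).1 = true))]
  exact ⟨h.1, h2'⟩


/-- the reducedness relation on adjacent letters. -/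
def Rred (a c : Bool × Bool) : Prop := a.1 = c.1 → a.2 = c.2

lemma pingpong (m : ℤ) (hm : 3 ≤ m) :
    ∀ (tl : List (Bool × Bool)) (hd : Bool × Bool),
      List.Chain' Rred (hd :: tl) →
      Concl m hd (((hd :: tl).map (tok m)).prod) := by
  intro tl
  induction tl with
  | nil =>
      intro hd _
      obtain ⟨l, s⟩ := hd
      simp only [List.map_cons, List.map_nil, List.prod_cons, List.prod_nil]
      cases l
      · exact conclB m hm s 1 (by simp [X0_one, Y0_one]) (by simp [X0_one])
      · exact conclA m hm s 1 (by simp [X0_one, Y0_one]) (by simp [Y0_one])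
  | cons hd2 tl2 ih =>
      intro hd hch
      obtain ⟨hR, hch2⟩ := List.isChain_cons_cons.mp hch
      have hc2 := ih hd2 hch2
      obtain ⟨l, s⟩ := hd
      obtain ⟨l2, s2⟩ := hd2
      have hprod : (((l,s) :: (l2,s2) :: tl2).map (tok m)).prod
          = tok m (l,s) * (((l2,s2) :: tl2).map (tok m)).prod := by
        simp
      rw [hprod]
      set g := (((l2,s2) :: tl2).map (tok m)).prod with hg
      cases l
      · cases l2
        · have hs : s = s2 := hR rfl
          subst hs
          simp only [Concl, if_neg Bool.false_ne_true] at hc2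
          exact conclB' m hm s g hc2.1 hc2.2
        · simp only [Concl, if_pos rfl] at hc2
          have hx : X0 g ≠ 0 := by
            have : 0 < |X0 g| := lt_of_le_of_lt (abs_nonneg _) hc2.1
            exact abs_pos.mp this
          exact conclB m hm s g hc2.1.le hx
      · cases l2
        · simp only [Concl, if_neg Bool.false_ne_true] at hc2
          have hy : Y0 g ≠ 0 := by
            have : 0 < |Y0 g| := lt_of_le_of_lt (abs_nonneg _) hc2.1
            exact abs_pos.mp this
          exact conclA m hm s g hc2.1.le hy
        · have hs : s = s2 := hR rfl
          subst hs
          simp only [Concl, if_pos rfl] at hc2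
          exact conclA' m hm s g hc2.1 hc2.2


lemma chain'_of_no_redex :
    ∀ L : List (Bool × Bool),
      (∀ (L₂ : List (Bool × Bool)) (x b : Bool) (L₃ : List (Bool × Bool)),
        L ≠ L₂ ++ (x, b) :: (x, !b) :: L₃) →
      List.Chain' Rred L := by
  intro L
  induction L with
  | nil => intro _; simp [List.Chain']
  | cons a tl ih =>
      intro h
      cases tl with
      | nil => simp [List.Chain']
      | cons c t =>
          rw [List.Chain', List.isChain_cons_cons]
          refine ⟨?_, ih ?_⟩
          · intro h1
            by_contra hne
            obtain ⟨x, b⟩ := a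
            obtain ⟨x2, b2⟩ := c
            simp only at h1
            subst h1
            have hb : b2 = !b := by
              revert hne; cases b <;> cases b2 <;> simp
            subst hb
            exact h [] x b t rfl
          · intro L₂ x b L₃ hEq
            exact h (a :: L₂) x b L₃ (by rw [hEq]; simp)

lemma chain'_toWord (w : FreeGroup Bool) : List.Chain' Rred w.toWord := by
  apply chain'_of_no_redex
  intro L₂ x b L₃ hEq
  have : FreeGroup.reduce w.toWord = L₂ ++ (x, b) :: (x, !b) :: L₃ := by
    rw [FreeGroup.reduce_toWord]; exact hEq
  exact FreeGroup.reduce.not this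

lemma coe_prod (m : ℤ) (f : Bool → SL2)
    (hf : ∀ l : Bool × Bool,
      ((cond l.2 (f l.1) (f l.1)⁻¹ : SL2) : Matrix (Fin 2) (Fin 2) ℤ) = tok m l) :
    ∀ L : List (Bool × Bool),
      ((List.prod (L.map fun x => cond x.2 (f x.1) (f x.1)⁻¹) : SL2) :
        Matrix (Fin 2) (Fin 2) ℤ) = (L.map (tok m)).prod := by
  intro L
  induction L with
  | nil => simp
  | cons a tl ih =>
      simp only [List.map_cons, List.prod_cons,
        Matrix.SpecialLinearGroup.coe_mul, ih, hf a]


def P : SL2 := ⟨!![0, 1; -1, 2], by norm_num [Matrix.det_fin_two_of]⟩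

lemma coe_P_zpow (k : ℤ) :
    ((P ^ k : SL2) : Matrix (Fin 2) (Fin 2) ℤ) = !![1 - k, k; -k, 1 + k] := by
  induction k using Int.induction_on with
  | zero => simp [Matrix.one_fin_two]
  | succ n ih =>
      rw [_root_.zpow_add_one, Matrix.SpecialLinearGroup.coe_mul, ih]
      show _ * (P : Matrix (Fin 2) (Fin 2) ℤ) = _
      unfold P
      ext i j
      fin_cases i <;> fin_cases j <;>
        simp [Matrix.mul_apply, Fin.sum_univ_two] <;> ring
  | pred n ih =>
      rw [_root_.zpow_sub_one, Matrix.SpecialLinearGroup.coe_mul, ih,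
        Matrix.SpecialLinearGroup.coe_inv]
      show _ * Matrix.adjugate (P : Matrix (Fin 2) (Fin 2) ℤ) = _
      unfold P
      rw [Matrix.adjugate_fin_two]
      ext i j
      fin_cases i <;> fin_cases j <;>
        simp [Matrix.mul_apply, Fin.sum_univ_two] <;> ring


end DeltaAux

open DeltaAux in
/-- For every integer `m ≥ 3`, the subgroup `Δ_m` of `SL₂(ℤ)` generated by
`[[1,m],[0,1]]` and `[[1,0],[m,1]]` has infinite index in `SL₂(ℤ)`
(infinite index is encoded by `Subgroup.index = 0`). -/
theorem Delta_m_infinite_index (m : ℤ) (hm : 3 ≤ m) :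
    (Subgroup.closure
        {g : Matrix.SpecialLinearGroup (Fin 2) ℤ |
          (g : Matrix (Fin 2) (Fin 2) ℤ) = !![1, m; 0, 1] ∨
          (g : Matrix (Fin 2) (Fin 2) ℤ) = !![1, 0; m, 1]}).index = 0 := by
  by_contra hne
  -- the two generators, as elements of `SL₂(ℤ)`
  set A : SL2 := ⟨!![1, m; 0, 1], by norm_num [Matrix.det_fin_two_of]⟩ with hA
  set B : SL2 := ⟨!![1, 0; m, 1], by norm_num [Matrix.det_fin_two_of]⟩ with hB
  set f : Bool → SL2 := fun b => cond b A B with hf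
  have hS : {g : Matrix.SpecialLinearGroup (Fin 2) ℤ |
          (g : Matrix (Fin 2) (Fin 2) ℤ) = !![1, m; 0, 1] ∨
          (g : Matrix (Fin 2) (Fin 2) ℤ) = !![1, 0; m, 1]} = Set.range f := by
    ext g
    constructor
    · rintro (h | h)
      · exact ⟨true, Subtype.ext h.symm⟩
      · exact ⟨false, Subtype.ext h.symm⟩
    · rintro ⟨b, rfl⟩
      cases b
      · exact Or.inr rfl
      · exact Or.inl rfl
  rw [hS, ← FreeGroup.range_lift_eq_closure] at hne
  set H := (FreeGroup.lift f).range with hH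
  -- the quotient is finite
  have hfin : Finite (SL2 ⧸ H) := by
    apply Nat.finite_of_card_ne_zero
    rwa [← Subgroup.index]
  -- two powers of P in the same coset
  obtain ⟨i, j, hij, he⟩ :=
    Finite.exists_ne_map_eq_of_infinite (fun k : ℤ => ((P ^ k : SL2) : SL2 ⧸ H))
  have hmem : P ^ (j - i) ∈ H := by
    have h := QuotientGroup.eq.mp he
    have : (P ^ i)⁻¹ * P ^ j = P ^ (j - i) := by
      rw [← _root_.zpow_neg, ← _root_.zpow_add]; ring_nf
    rwa [this] at h
  set k : ℤ := j - i with hk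
  have hk0 : k ≠ 0 := sub_ne_zero_of_ne (Ne.symm hij)
  obtain ⟨w, hw⟩ := hmem
  -- the free-group word is nontrivial
  have hw1 : w ≠ 1 := by
    rintro rfl
    rw [_root_.map_one] at hw
    have hcoe := congrArg (fun g : SL2 => (g : Matrix (Fin 2) (Fin 2) ℤ)) hw
    rw [coe_P_zpow] at hcoe
    have h01 := congrFun (congrFun hcoe.symm 0) 1
    simp [Matrix.one_fin_two] at h01
    exact hk0 h01
  -- matrices: the word evaluates to P^k
  have hfA : ∀ l : Bool × Bool,
      ((cond l.2 (f l.1) (f l.1)⁻¹ : SL2) : Matrix (Fin 2) (Fin 2) ℤ) = tok m l := by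
    rintro ⟨l, s⟩
    cases l <;> cases s <;> simp only [hf, cond_true, cond_false, Matrix.SpecialLinearGroup.coe_inv] <;>
      simp [hf, hA, hB, tok, eps, Matrix.SpecialLinearGroup.coe_inv,
        Matrix.adjugate_fin_two]
  have hlift : FreeGroup.lift f w
      = List.prod (w.toWord.map fun x => cond x.2 (f x.1) (f x.1)⁻¹) := by
    conv_lhs => rw [← FreeGroup.mk_toWord (x := w)]
    rw [FreeGroup.lift_mk]
  have hmat : ((w.toWord.map (tok m)).prod : Matrix (Fin 2) (Fin 2) ℤ)
      = !![1 - k, k; -k, 1 + k] := by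
    rw [← coe_prod m f hfA w.toWord, ← hlift, hw, coe_P_zpow]
  -- ping-pong
  have hL : w.toWord ≠ [] := fun h => hw1 (FreeGroup.toWord_eq_nil_iff.mp h)
  obtain ⟨hd, tl, hcons⟩ := List.exists_cons_of_ne_nil hL
  have hchain : List.Chain' Rred (hd :: tl) := by
    rw [← hcons]; exact chain'_toWord w
  have hkey := pingpong m hm tl hd hchain
  rw [← hcons, hmat] at hkey
  have hX : X0 (!![1 - k, k; -k, 1 + k]) = 1 := by simp [X0]
  have hY : Y0 (!![1 - k, k; -k, 1 + k]) = 1 := by simp [Y0]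
  obtain ⟨l, s⟩ := hd
  cases l <;> simp [Concl, hX, hY] at hkey
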